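/- Let $(\Omega,\mathcal{A},P)$ be a probability space, $t, t_0$ positive integers with $t_0 \le t$, and for each $j \in \{1,\ldots,t\}$ and $s \in \{1,\ldots,t_0\}$ let $W_{j,s} \in \mathcal{A}$ be events satisfying: (i) $W_{j,s} \subseteq W_{j,s+1}$ for all $j$ and $s < t_0$ (monotonicity), and (ii) $P(W_{j,s}) \le \zeta_s$ for all $j,s$, where $0 = \zeta_0 \le \zeta_1 \le \cdots \le \zeta_{t_0} \le 1$. Let $V_s$ be the event that $W_{j,s}$ occurs for at least $s$ distinct indices $j \in \{1,\ldots,t\}$. Then $P\left(\bigcup_{s=1}^{t_0} V_s\right) \le t \sum_{s=1}^{t_0} \frac{\zeta_s - \zeta_{s-1}}{s}$. -/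

import Mathlib

open Finset MeasureTheory
open scoped Classical

lemma abel_aux (F G : ℕ → ℝ) (h0 : F 0 = G 0) :
    ∀ n : ℕ, (∀ s, 1 ≤ s → s ≤ n → F s ≤ G s) →
      (∑ s ∈ Finset.Icc 1 n, (F s - F (s-1))/(s:ℝ)) + (G n - F n)/(n:ℝ)
        ≤ ∑ s ∈ Finset.Icc 1 n, (G s - G (s-1))/(s:ℝ) := by
  intro n
  induction n with
  | zero => intro _; simp [h0]
  | succ n ih =>
    intro h
    have hIH := ih (fun s h1 h2 => h s h1 (h2.trans (Nat.le_succ n)))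
    rw [Finset.sum_Icc_succ_top (by omega), Finset.sum_Icc_succ_top (by omega)]
    have key : (G n - F n)/((n:ℝ)+1) ≤ (G n - F n)/(n:ℝ) := by
      rcases Nat.eq_zero_or_pos n with h0' | hpos
      · subst h0'; simp [h0]
      · have hFG : F n ≤ G n := h n hpos (Nat.le_succ n)
        have h1 : (0:ℝ) < n := by exact_mod_cast hpos
        apply div_le_div_of_nonneg_left (by linarith) h1 (by linarith)
    have comb : (F (n+1) - F ((n+1)-1))/((n+1:ℕ):ℝ) + (G (n+1) - F (n+1))/((n+1:ℕ):ℝ)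
        - (G (n+1) - G ((n+1)-1))/((n+1:ℕ):ℝ) = (G n - F n)/((n:ℝ)+1) := by
      simp only [Nat.add_sub_cancel]
      push_cast
      field_simp
      ring
    push_cast at comb ⊢
    linarith [hIH, key, comb]

theorem stmt_1 {Ω : Type*} [MeasurableSpace Ω] (μ : Measure Ω) [IsProbabilityMeasure μ]
    (t t0 : ℕ) (ht0 : 1 ≤ t0) (htt0 : t0 ≤ t)
    (W : ℕ → ℕ → Set Ω) (hWmeas : ∀ j s, MeasurableSet (W j s))
    (hWmono : ∀ j s, s < t0 → W j s ⊆ W j (s + 1))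
    (ζ : ℕ → ℝ) (hζ0 : ζ 0 = 0) (hζmono : ∀ s < t0, ζ s ≤ ζ (s + 1)) (hζ1 : ζ t0 ≤ 1)
    (hp : ∀ j ∈ Finset.Icc 1 t, ∀ s ∈ Finset.Icc 1 t0, (μ (W j s)).toReal ≤ ζ s) :
    (μ (⋃ s ∈ Finset.Icc 1 t0,
        {ω | s ≤ ((Finset.Icc 1 t).filter (fun j => ω ∈ W j s)).card})).toReal
      ≤ (t : ℝ) * ∑ s ∈ Finset.Icc 1 t0, (ζ s - ζ (s - 1)) / (s : ℝ) := by
  classical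
  set Vs : ℕ → Set Ω :=
    fun s => {ω | s ≤ ((Finset.Icc 1 t).filter (fun j => ω ∈ W j s)).card} with hVsdef
  -- measurability of Vs
  have hcardmeas : ∀ s, Measurable
      (fun ω => ((Finset.Icc 1 t).filter (fun j => ω ∈ W j s)).card) := by
    intro s
    have he : (fun ω => ((Finset.Icc 1 t).filter (fun j => ω ∈ W j s)).card)
        = fun ω => ∑ j ∈ Finset.Icc 1 t, if ω ∈ W j s then 1 else 0 := by
      funext ω; rw [Finset.card_filter]
    rw [he]
    exact Finset.measurable_sum _
      (fun j _ => Measurable.ite (hWmeas j s) measurable_const measurable_const)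
  have hVmeas : ∀ s, MeasurableSet (Vs s) :=
    fun s => measurableSet_le measurable_const (hcardmeas s)
  -- the "first occurrence" sets
  set B : ℕ → Set Ω := fun s => Vs s \ ⋃ r ∈ Finset.Ico 1 s, Vs r with hBdef
  have hBmeas : ∀ s, MeasurableSet (B s) := by
    intro s
    exact (hVmeas s).diff (MeasurableSet.biUnion (Finset.Ico 1 s).countable_toSet
      (fun r _ => hVmeas r))
  have hBsub : ∀ s, B s ⊆ Vs s := fun s => Set.diff_subset
  have hBdisj : ∀ r r', 1 ≤ r → r < r' → Disjoint (B r) (B r') := by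
    intro r r' h1 hlt
    rw [Set.disjoint_left]
    intro x hx hx'
    have hr : r ∈ Finset.Ico 1 r' := by simp only [Finset.mem_Ico]; omega
    exact hx'.2 (Set.mem_biUnion hr (hBsub r hx))
  -- union equality
  have hunion : (⋃ s ∈ Finset.Icc 1 t0, Vs s) = ⋃ s ∈ Finset.Icc 1 t0, B s := by
    apply Set.Subset.antisymm
    · intro ω hω
      simp only [Set.mem_iUnion] at hω ⊢
      obtain ⟨s, hs, hωs⟩ := hω
      rw [Finset.mem_Icc] at hs
      have hex : ∃ m, 1 ≤ m ∧ m ≤ t0 ∧ ω ∈ Vs m := ⟨s, hs.1, hs.2, hωs⟩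
      classical
      let P : ℕ → Prop := fun m => 1 ≤ m ∧ m ≤ t0 ∧ ω ∈ Vs m
      have hexP : ∃ m, P m := hex
      obtain ⟨h1, h2, h3⟩ := Nat.find_spec hexP
      refine ⟨Nat.find hexP, Finset.mem_Icc.mpr ⟨h1, h2⟩, h3, ?_⟩
      intro hmem
      simp only [Set.mem_iUnion] at hmem
      obtain ⟨r, hr, hωr⟩ := hmem
      rw [Finset.mem_Ico] at hr
      exact Nat.find_min hexP hr.2 ⟨hr.1, by omega, hωr⟩
    · intro ω hω
      simp only [Set.mem_iUnion] at hω ⊢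
      obtain ⟨s, hs, hωs⟩ := hω
      exact ⟨s, hs, hBsub s hωs⟩
  -- Step A
  have hA : (μ (⋃ s ∈ Finset.Icc 1 t0, Vs s)).toReal
      ≤ ∑ s ∈ Finset.Icc 1 t0, (μ (B s)).toReal := by
    rw [hunion]
    have h1 : μ (⋃ s ∈ Finset.Icc 1 t0, B s) ≤ ∑ s ∈ Finset.Icc 1 t0, μ (B s) :=
      measure_biUnion_finset_le _ _
    have h2 : (∑ s ∈ Finset.Icc 1 t0, μ (B s)) ≠ ⊤ := by
      refine (ENNReal.sum_lt_top.mpr (fun s _ => measure_lt_top μ _)).ne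
    calc (μ (⋃ s ∈ Finset.Icc 1 t0, B s)).toReal
        ≤ (∑ s ∈ Finset.Icc 1 t0, μ (B s)).toReal := ENNReal.toReal_mono h2 h1
      _ = ∑ s ∈ Finset.Icc 1 t0, (μ (B s)).toReal :=
          ENNReal.toReal_sum (fun s _ => measure_ne_top μ _)
  -- Step 2
  have hstep2 : ∀ s ∈ Finset.Icc 1 t0,
      (μ (B s)).toReal ≤ (∑ j ∈ Finset.Icc 1 t, (μ (W j s ∩ B s)).toReal) / (s:ℝ) := by
    intro s hs
    rw [Finset.mem_Icc] at hs
    have hspos : (0:ℝ) < s := by exact_mod_cast hs.1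
    rw [le_div_iff₀ hspos]
    have hmeasI : ∀ j, MeasurableSet (W j s ∩ B s) := fun j => (hWmeas j s).inter (hBmeas s)
    have hEN : (s:ENNReal) * μ (B s) ≤ ∑ j ∈ Finset.Icc 1 t, μ (W j s ∩ B s) := by
      calc (s:ENNReal) * μ (B s)
          = ∫⁻ ω, Set.indicator (B s) (fun _ => (s:ENNReal)) ω ∂μ := by
            rw [lintegral_indicator_const (hBmeas s)]
        _ ≤ ∫⁻ ω, ∑ j ∈ Finset.Icc 1 t,
              Set.indicator (W j s ∩ B s) (fun _ => (1:ENNReal)) ω ∂μ := by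
            apply lintegral_mono
            intro ω
            by_cases hω : ω ∈ B s
            · rw [Set.indicator_of_mem hω]
              have hcard : s ≤ ((Finset.Icc 1 t).filter (fun j => ω ∈ W j s)).card := hω.1
              have hsum : (∑ j ∈ Finset.Icc 1 t,
                    Set.indicator (W j s ∩ B s) (fun _ => (1:ENNReal)) ω)
                  = (((Finset.Icc 1 t).filter (fun j => ω ∈ W j s)).card : ENNReal) := by
                rw [Finset.card_filter]
                push_cast
                apply Finset.sum_congr rfl
                intro j _
                by_cases hj : ω ∈ W j s
                · simp [Set.indicator, hj, hω, Set.mem_inter_iff]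
                · simp [Set.indicator, hj, Set.mem_inter_iff]
              show (s:ENNReal) ≤ ∑ j ∈ Finset.Icc 1 t,
                Set.indicator (W j s ∩ B s) (fun _ => (1:ENNReal)) ω
              rw [hsum]
              exact_mod_cast hcard
            · rw [Set.indicator_of_notMem hω]
              exact zero_le
        _ = ∑ j ∈ Finset.Icc 1 t,
              ∫⁻ ω, Set.indicator (W j s ∩ B s) (fun _ => (1:ENNReal)) ω ∂μ := by
            apply lintegral_finset_sum
            intro j _
            exact measurable_const.indicator (hmeasI j)
        _ = ∑ j ∈ Finset.Icc 1 t, μ (W j s ∩ B s) := by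
            apply Finset.sum_congr rfl
            intro j _
            rw [lintegral_indicator_const (hmeasI j), one_mul]
    have hfin : (∑ j ∈ Finset.Icc 1 t, μ (W j s ∩ B s)) ≠ ⊤ := by
      refine (ENNReal.sum_lt_top.mpr (fun j _ => measure_lt_top μ _)).ne
    have hre := ENNReal.toReal_mono hfin hEN
    rw [ENNReal.toReal_mul, ENNReal.toReal_sum (fun j _ => measure_ne_top μ _)] at hre
    have hcast : ((s:ENNReal)).toReal = (s:ℝ) := by simp
    rw [hcast] at hre
    linarith [hre]
  -- monotone chain
  have hchain : ∀ j, ∀ s, s ≤ t0 → ∀ r, r ≤ s → W j r ⊆ W j s := by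
    intro j s
    induction s with
    | zero =>
      intro _ r hr
      rw [Nat.le_zero] at hr
      subst hr; exact subset_rfl
    | succ n ih =>
      intro hle r hr
      rcases eq_or_lt_of_le hr with h | h
      · subst h; exact subset_rfl
      · exact (ih (by omega) r (by omega)).trans (hWmono j n (by omega))
  -- Step 3
  have hstep3 : ∀ j ∈ Finset.Icc 1 t,
      ∑ s ∈ Finset.Icc 1 t0, (μ (W j s ∩ B s)).toReal / (s:ℝ)
        ≤ ∑ s ∈ Finset.Icc 1 t0, (ζ s - ζ (s-1)) / (s:ℝ) := by
    intro j hj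
    set F : ℕ → ℝ := fun n => ∑ r ∈ Finset.Icc 1 n, (μ (W j r ∩ B r)).toReal with hFdef
    have hF0 : F 0 = ζ 0 := by simp [hFdef, hζ0]
    have hFζ : ∀ s, 1 ≤ s → s ≤ t0 → F s ≤ ζ s := by
      intro s h1 h2
      have hdisj : (↑(Finset.Icc 1 s) : Set ℕ).PairwiseDisjoint (fun r => W j r ∩ B r) := by
        intro r hr r' hr' hne
        simp only [Finset.coe_Icc, Set.mem_Icc] at hr hr'
        rcases Nat.lt_or_ge r r' with h | h
        · exact (hBdisj r r' hr.1 h).mono Set.inter_subset_right Set.inter_subset_right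
        · have hlt : r' < r := by omega
          exact ((hBdisj r' r hr'.1 hlt).symm).mono
            Set.inter_subset_right Set.inter_subset_right
      have hEq : (∑ r ∈ Finset.Icc 1 s, μ (W j r ∩ B r))
          = μ (⋃ r ∈ Finset.Icc 1 s, (W j r ∩ B r)) :=
        (measure_biUnion_finset hdisj (fun r _ => (hWmeas j r).inter (hBmeas r))).symm
      have hsub : (⋃ r ∈ Finset.Icc 1 s, (W j r ∩ B r)) ⊆ W j s := by
        intro x hx
        simp only [Set.mem_iUnion] at hx
        obtain ⟨r, hr, hxr⟩ := hx
        rw [Finset.mem_Icc] at hr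
        exact hchain j s h2 r hr.2 hxr.1
      calc F s = (∑ r ∈ Finset.Icc 1 s, μ (W j r ∩ B r)).toReal :=
            (ENNReal.toReal_sum (fun r _ => measure_ne_top μ _)).symm
        _ = (μ (⋃ r ∈ Finset.Icc 1 s, (W j r ∩ B r))).toReal := by rw [hEq]
        _ ≤ (μ (W j s)).toReal := ENNReal.toReal_mono (measure_ne_top μ _) (measure_mono hsub)
        _ ≤ ζ s := hp j hj s (Finset.mem_Icc.mpr ⟨h1, h2⟩)
    have habel := abel_aux F ζ hF0 t0 hFζ
    have ht0pos : (0:ℝ) < t0 := by exact_mod_cast ht0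
    have hlast : 0 ≤ (ζ t0 - F t0)/(t0:ℝ) := by
      apply div_nonneg _ (le_of_lt ht0pos)
      linarith [hFζ t0 ht0 le_rfl]
    have hrw : ∑ s ∈ Finset.Icc 1 t0, (μ (W j s ∩ B s)).toReal / (s:ℝ)
        = ∑ s ∈ Finset.Icc 1 t0, (F s - F (s-1))/(s:ℝ) := by
      apply Finset.sum_congr rfl
      intro s hsmem
      rw [Finset.mem_Icc] at hsmem
      obtain ⟨k, rfl⟩ : ∃ k, s = k + 1 := ⟨s - 1, by omega⟩
      congr 1
      simp only [hFdef, Nat.add_sub_cancel]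
      rw [Finset.sum_Icc_succ_top (by omega : 1 ≤ k + 1)]
      ring
    rw [hrw]
    linarith [habel, hlast]
  -- assemble
  calc (μ (⋃ s ∈ Finset.Icc 1 t0, Vs s)).toReal
      ≤ ∑ s ∈ Finset.Icc 1 t0, (μ (B s)).toReal := hA
    _ ≤ ∑ s ∈ Finset.Icc 1 t0,
          (∑ j ∈ Finset.Icc 1 t, (μ (W j s ∩ B s)).toReal)/(s:ℝ) :=
        Finset.sum_le_sum hstep2
    _ = ∑ s ∈ Finset.Icc 1 t0,
          ∑ j ∈ Finset.Icc 1 t, (μ (W j s ∩ B s)).toReal/(s:ℝ) := by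
        exact Finset.sum_congr rfl (fun s _ => Finset.sum_div _ _ _)
    _ = ∑ j ∈ Finset.Icc 1 t,
          ∑ s ∈ Finset.Icc 1 t0, (μ (W j s ∩ B s)).toReal/(s:ℝ) := Finset.sum_comm
    _ ≤ ∑ j ∈ Finset.Icc 1 t,
          ∑ s ∈ Finset.Icc 1 t0, (ζ s - ζ (s-1))/(s:ℝ) := Finset.sum_le_sum hstep3
    _ = (t:ℝ) * ∑ s ∈ Finset.Icc 1 t0, (ζ s - ζ (s-1))/(s:ℝ) := by
        rw [Finset.sum_const, Nat.card_Icc, nsmul_eq_mul]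
        norm_num
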